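/- Let d ≥ 3, 0 ≤ δ ≤ (d-1)(d-2)/2, k = min{ℓ ∈ ℕ : δ ≤ ℓ(ℓ+3)/2}, and N^{(1)}_{d,δ} = N_d ∪ {n : n ≥ (d-k-3)d + k(k+3)/2 - δ + 2}. Then the complement ℕ \ N^{(1)}_{d,δ} has exactly g = (d-1)(d-2)/2 - δ elements. -/

import Mathlib

def Nd (d : ℕ) : Set ℕ := {n | ∃ a b : ℕ, n = a * (d - 1) + b * d}

def N1 (d δ k : ℕ) : Set ℕ :=
  Nd d ∪ {n | ((d : ℤ) - k - 3) * d + (k * (k + 3)) / 2 - δ + 2 ≤ (n : ℤ)}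

lemma mem_Nd_iff (c n : ℕ) : n ∈ Nd (c + 3) ↔ n % (c + 2) ≤ n / (c + 2) := by
  simp only [Nd, Set.mem_setOf_eq, show c + 3 - 1 = c + 2 from rfl]
  constructor
  · rintro ⟨a, b, rfl⟩
    rw [show a * (c + 2) + b * (c + 3) = b + (a + b) * (c + 2) from by ring,
      Nat.add_mul_mod_self_right, Nat.add_mul_div_right _ _ (by omega : 0 < c + 2)]
    exact (Nat.mod_le b (c + 2)).trans ((Nat.le_add_left b a).trans
      (Nat.le_add_left (a + b) _))
  · intro h
    refine ⟨n / (c + 2) - n % (c + 2), n % (c + 2), ?_⟩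
    have hdm := Nat.div_add_mod n (c + 2)
    have hsub : (n / (c + 2) - n % (c + 2)) * (c + 2)
        = n / (c + 2) * (c + 2) - n % (c + 2) * (c + 2) := Nat.sub_mul _ _ _
    have h2 : n % (c + 2) * (c + 3) = n % (c + 2) * (c + 2) + n % (c + 2) := by ring
    have h3 : (c + 2) * (n / (c + 2)) = n / (c + 2) * (c + 2) := by ring
    have h4 : n % (c + 2) * (c + 2) ≤ n / (c + 2) * (c + 2) := Nat.mul_le_mul_right _ h
    omega

lemma gap_iff (m q i : ℕ) (hm : 2 ≤ m) (hq : q ≤ m - 1) (hi : i < m + 1) :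
    ((q * (m + 1) + i) / m < (q * (m + 1) + i) % m) ↔ (1 ≤ i ∧ i ≤ m - 1 - q) := by
  have hn : q * (m + 1) + i = m * q + (q + i) := by ring
  rw [hn]
  by_cases hc : q + i < m
  · rw [Nat.mul_add_div (by omega), Nat.mul_add_mod, Nat.div_eq_of_lt hc, Nat.mod_eq_of_lt hc]
    omega
  · have h4 : q + i - m < m := by omega
    have hm2 : m * (q + 1) = m * q + m := by ring
    have e2 : m * q + (q + i) = m * (q + 1) + (q + i - m) := by omega
    rw [e2, Nat.mul_add_div (by omega), Nat.mul_add_mod, Nat.div_eq_of_lt h4, Nat.mod_eq_of_lt h4]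
    omega

lemma row_card (m q s : ℕ) (hm : 2 ≤ m) (hq : q ≤ m - 1) (hs : s ≤ m + 1) :
    ((Finset.Ico (q * (m + 1)) (q * (m + 1) + s)).filter (fun n => n / m < n % m)).card
      = min s (m - q) - 1 := by
  have hset : (Finset.Ico (q * (m + 1)) (q * (m + 1) + s)).filter (fun n => n / m < n % m)
      = Finset.Ico (q * (m + 1) + 1) (q * (m + 1) + min s (m - q)) := by
    ext n
    simp only [Finset.mem_filter, Finset.mem_Ico]
    constructor
    · rintro ⟨⟨h1, h2⟩, h3⟩
      obtain ⟨i, rfl⟩ : ∃ i, n = q * (m + 1) + i := ⟨n - q * (m + 1), by omega⟩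
      have := (gap_iff m q i hm hq (by omega)).mp h3
      omega
    · rintro ⟨h1, h2⟩
      obtain ⟨i, rfl⟩ : ∃ i, n = q * (m + 1) + i := ⟨n - q * (m + 1), by omega⟩
      have := (gap_iff m q i hm hq (by omega)).mpr (by omega)
      exact ⟨⟨by omega, by omega⟩, this⟩
  rw [hset, Nat.card_Ico]
  omega

lemma filter_range_split (p : ℕ → Prop) [DecidablePred p] (a b : ℕ) (h : a ≤ b) :
    ((Finset.range b).filter p).card
      = ((Finset.range a).filter p).card + ((Finset.Ico a b).filter p).card := by
  rw [Finset.range_eq_Ico,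
    ← Finset.Ico_union_Ico_eq_Ico (Nat.zero_le a) h, Finset.filter_union,
    Finset.card_union_of_disjoint
      (Finset.disjoint_filter_filter (Finset.Ico_disjoint_Ico_consecutive 0 a b)), Finset.range_eq_Ico]

lemma rows_count (m : ℕ) (hm : 2 ≤ m) :
    ∀ q, q ≤ m - 1 →
      2 * ((Finset.range (q * (m + 1))).filter (fun n => n / m < n % m)).card + q * q + q
        = 2 * (q * m) := by
  intro q
  induction q with
  | zero => simp
  | succ q ih =>
    intro hq
    have hb : (q + 1) * (m + 1) = q * (m + 1) + (m + 1) := by ring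
    rw [hb, filter_range_split (fun n => n / m < n % m) (q * (m + 1)) (q * (m + 1) + (m + 1))
        (by omega),
      row_card m q (m + 1) hm (by omega) (by omega)]
    have hmin : min (m + 1) (m - q) = m - q := by omega
    rw [hmin]
    have h1 : (q + 1) * (q + 1) = q * q + 2 * q + 1 := by ring
    have h2 : (q + 1) * m = q * m + m := by ring
    have := ih (by omega)
    omega

theorem stmt6 (d δ k : ℕ) (hd : 3 ≤ d) (hδ : δ ≤ (d - 1) * (d - 2) / 2)
    (hk1 : δ ≤ k * (k + 3) / 2) (hk2 : ∀ ℓ : ℕ, δ ≤ ℓ * (ℓ + 3) / 2 → k ≤ ℓ) :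
    (N1 d δ k)ᶜ.ncard = (d - 1) * (d - 2) / 2 - δ := by
  obtain ⟨c, rfl⟩ : ∃ c, d = c + 3 := ⟨d - 3, by omega⟩
  simp only [show c + 3 - 1 = c + 2 from rfl, show c + 3 - 2 = c + 1 from rfl] at hδ ⊢
  obtain ⟨w, hw⟩ := Nat.even_mul_succ_self (c + 1)
  have hw' : (c + 2) * (c + 1) = w + w := by rw [mul_comm]; exact hw
  obtain ⟨e2, he2⟩ := Nat.even_mul_succ_self k
  have hke : k * (k + 3) = e2 + e2 + 2 * k := by
    have : k * (k + 3) = k * (k + 1) + 2 * k := by ring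
    omega
  set e := k * (k + 3) / 2 with hedef
  have he : e + e = k * (k + 3) := by omega
  have hδe : δ ≤ e := hk1
  have hlow : e2 ≤ δ := by
    rcases Nat.eq_zero_or_pos k with hk0 | hk0
    · subst hk0; simp at he2; omega
    · by_contra hcon
      have hrel : (k - 1) * ((k - 1) + 3) + 2 = k * (k + 1) := by
        obtain ⟨j, rfl⟩ : ∃ j, k = j + 1 := ⟨k - 1, by omega⟩
        show j * (j + 3) + 2 = _
        ring
      have h1 : δ ≤ (k - 1) * ((k - 1) + 3) / 2 := by omega
      have := hk2 (k - 1) h1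
      omega
  have hkc : k ≤ c + 1 := by
    apply hk2
    have hx : (c + 1) * ((c + 1) + 3) = (c + 2) * (c + 1) + 2 * (c + 1) := by ring
    omega
  rcases Nat.lt_or_ge k (c + 1) with hkmain | hkbig
  · -- main case : k ≤ c
    obtain ⟨a, rfl⟩ : ∃ a, c = k + a := ⟨c - k, by omega⟩
    have hTeq : ((↑(k + a + 3) : ℤ) - ↑k - 3) * ↑(k + a + 3) + (↑k * (↑k + 3)) / 2 - ↑δ + 2
        = ((a * (k + a + 3) + (e - δ + 2) : ℕ) : ℤ) := by
      have hKe : (e : ℤ) + e = (k : ℤ) * (↑k + 3) := by exact_mod_cast he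
      rw [show ((↑(k + a + 3) : ℤ) - ↑k - 3) = (a : ℤ) from by push_cast; ring, ← hKe,
        show ((e : ℤ) + e) / 2 = (e : ℤ) from by omega]
      push_cast [Nat.cast_sub hδe]
      ring
    have hcompl : (N1 (k + a + 3) δ k)ᶜ
        = ↑((Finset.range (a * (k + a + 3) + (e - δ + 2))).filter
            (fun n => n / (k + a + 2) < n % (k + a + 2))) := by
      ext n
      simp only [N1, Set.mem_compl_iff, Set.mem_union, Set.mem_setOf_eq, not_or,
        Finset.coe_filter, Set.mem_setOf_eq, Finset.mem_range, mem_Nd_iff (k + a) n, hTeq,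
        Nat.cast_le]
      omega
    rw [hcompl, Set.ncard_coe_finset]
    have htk : e - δ ≤ k := by omega
    have hsplit := filter_range_split (fun n => n / (k + a + 2) < n % (k + a + 2))
      (a * (k + a + 3)) (a * (k + a + 3) + (e - δ + 2)) (by omega)
    have hrow := row_card (k + a + 2) a ((e - δ) + 2) (by omega) (by omega) (by omega)
    have hmin : min ((e - δ) + 2) ((k + a + 2) - a) = (e - δ) + 2 := by omega
    rw [hmin] at hrow
    simp only [show k + a + 2 + 1 = k + a + 3 from rfl] at hrow
    rw [hrow] at hsplit
    rw [hsplit]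
    have hrows := rows_count (k + a + 2) (by omega) a (by omega)
    simp only [show k + a + 2 + 1 = k + a + 3 from rfl] at hrows
    have key : 2 * (a * (k + a + 2)) + k * (k + 3) + 2
        = (k + a + 2) * (k + a + 1) + a * a + a := by ring
    omega
  · -- k = c + 1
    have hkeq : k = c + 1 := by omega
    subst hkeq
    have hδw : δ = w := by
      have hxy : (c + 1) * ((c + 1) + 1) = (c + 2) * (c + 1) := by ring
      omega
    have hempty : (N1 (c + 3) δ (c + 1))ᶜ = ∅ := by
      have hT0 : ((↑(c + 3) : ℤ) - ↑(c + 1) - 3) * ↑(c + 3)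
          + (↑(c + 1) * (↑(c + 1) + 3)) / 2 - (δ : ℤ) + 2 = 0 := by
        have hwz : ((c : ℤ) + 2) * ((c : ℤ) + 1) = (w : ℤ) + w := by exact_mod_cast hw'
        have h2 : ((c + 1 : ℕ) : ℤ) * (((c + 1 : ℕ) : ℤ) + 3) = 2 * w + 2 * c + 2 := by
          push_cast
          linear_combination hwz
        rw [h2, show (2 * (w : ℤ) + 2 * c + 2) / 2 = (w : ℤ) + c + 1 from by omega,
          show ((δ : ℕ) : ℤ) = (w : ℤ) from by exact_mod_cast hδw]
        push_cast
        ring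
      ext n
      simp only [Set.mem_compl_iff, Set.mem_empty_iff_false, iff_false, not_not, N1,
        Set.mem_union, Set.mem_setOf_eq]
      right
      rw [hT0]
      exact_mod_cast Nat.zero_le n
    rw [hempty]
    simp only [Set.ncard_empty]
    have hxy : (c + 1) * ((c + 1) + 1) = (c + 2) * (c + 1) := by ring
    omega
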